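/- Let F be a standard Borel space. For every instance S ∈ Finset F, every m ∈ ℕ, and all measurable sets G₁, …, G_m ⊆ F, the set of parallel follow-up instances {S ∪ {x₁, …, x_m} : x₁ ∈ G₁, …, x_m ∈ G_m} is a measurable subset of the instance space 𝔻. -/

import Mathlib

open MeasureTheory
open scoped ENNReal

/-- The canonical embedding of a database instance (a finite set of facts)
into the space of measures: `S ↦ ∑_{x ∈ S} δ_x`. -/
noncomputable def iota {F : Type*} [MeasurableSpace F] (S : Finset F) : Measure F :=
  ∑ x ∈ S, Measure.dirac x

/-- The instance space `𝔻`: `Finset F` equipped with the σ-algebra comapped along `ι`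
from the canonical σ-algebra on `Measure F`. -/
noncomputable instance instanceSpace (F : Type*) [MeasurableSpace F] : MeasurableSpace (Finset F) :=
  MeasurableSpace.comap iota inferInstance

section Aux

variable {F : Type*} [MeasurableSpace F]

lemma iota_apply_eq_card (T : Finset F) {A : Set F} (hA : MeasurableSet A)
    [DecidablePred (· ∈ A)] :
    iota T A = ((T.filter (· ∈ A)).card : ℝ≥0∞) := by
  rw [iota, Measure.finset_sum_apply, Finset.card_filter, Nat.cast_sum]
  refine Finset.sum_congr rfl fun x _ => ?_
  rw [Measure.dirac_apply' _ hA]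
  by_cases h : x ∈ A <;> simp [h, Set.indicator]

lemma one_le_iota_iff (T : Finset F) {A : Set F} (hA : MeasurableSet A) :
    1 ≤ iota T A ↔ ∃ x ∈ T, x ∈ A := by
  classical
  rw [iota_apply_eq_card T hA]
  rw [show (1 : ℝ≥0∞) = ((1 : ℕ) : ℝ≥0∞) by norm_num, Nat.cast_le]
  rw [Nat.one_le_iff_ne_zero, Ne, Finset.card_eq_zero, ← Ne,
    ← Finset.nonempty_iff_ne_empty, Finset.filter_nonempty_iff]

lemma iota_le_iff (T : Finset F) {A : Set F} (hA : MeasurableSet A)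
    [DecidablePred (· ∈ A)] (n : ℕ) :
    iota T A ≤ n ↔ (T.filter (· ∈ A)).card ≤ n := by
  rw [iota_apply_eq_card T hA, Nat.cast_le]

end Aux

/-- For every instance `S`, every `m ∈ ℕ` and all measurable sets `G₁, …, G_m ⊆ F`,
the set of parallel follow-up instances `{S ∪ {x₁, …, x_m} : xᵢ ∈ Gᵢ}` is a measurable
subset of the instance space `𝔻`. -/
theorem measurableSet_parallelFollowUp (F : Type*) [MeasurableSpace F]
    [StandardBorelSpace F] [DecidableEq F] (S : Finset F) (m : ℕ)
    (G : Fin m → Set F) (hG : ∀ i, MeasurableSet (G i)) :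
    MeasurableSet
      ((fun v : Fin m → F => S ∪ Finset.image v Finset.univ) '' (Set.univ.pi G)) := by
  classical
  have hSmeas : MeasurableSet (↑S : Set F) := S.finite_toSet.measurableSet
  -- the "blocking" sets for the dual Hall condition
  set D : Finset (Fin m) → Set F := fun I => ⋂ i, ⋂ (_ : i ∉ I), (G i)ᶜ with hD
  have hDmeas : ∀ I, MeasurableSet (D I \ ↑S) := fun I =>
    ((MeasurableSet.iInter fun i => MeasurableSet.iInter fun _ => (hG i).compl)).diff hSmeas
  have hmemD : ∀ (I : Finset (Fin m)) (x : F), x ∈ D I ↔ ∀ i, i ∉ I → x ∉ G i := by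
    intro I x; simp [hD]
  -- the measurable set of measures
  set M : Set (Measure F) :=
    {μ | (∀ x ∈ S, 1 ≤ μ {x}) ∧ (∀ i, 1 ≤ μ (G i)) ∧
      ∀ I : Finset (Fin m), μ (D I \ ↑S) ≤ (I.card : ℝ≥0∞)} with hM
  have hMmeas : MeasurableSet M := by
    have h1 : MeasurableSet {μ : Measure F | ∀ x ∈ S, 1 ≤ μ {x}} := by
      have : {μ : Measure F | ∀ x ∈ S, 1 ≤ μ {x}} =
          ⋂ x ∈ S, (fun μ : Measure F => μ {x}) ⁻¹' Set.Ici 1 := by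
        ext μ; simp
      rw [this]
      exact MeasurableSet.biInter S.countable_toSet fun x _ =>
        Measure.measurable_coe (measurableSet_singleton x) measurableSet_Ici
    have h2 : MeasurableSet {μ : Measure F | ∀ i, 1 ≤ μ (G i)} := by
      have : {μ : Measure F | ∀ i, 1 ≤ μ (G i)} =
          ⋂ i, (fun μ : Measure F => μ (G i)) ⁻¹' Set.Ici 1 := by
        ext μ; simp
      rw [this]
      exact MeasurableSet.iInter fun i => Measure.measurable_coe (hG i) measurableSet_Ici
    have h3 : MeasurableSet
        {μ : Measure F | ∀ I : Finset (Fin m), μ (D I \ ↑S) ≤ (I.card : ℝ≥0∞)} := by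
      have : {μ : Measure F | ∀ I : Finset (Fin m), μ (D I \ ↑S) ≤ (I.card : ℝ≥0∞)} =
          ⋂ I : Finset (Fin m), (fun μ : Measure F => μ (D I \ ↑S)) ⁻¹' Set.Iic (I.card : ℝ≥0∞) := by
        ext μ; simp
      rw [this]
      exact MeasurableSet.iInter fun I => Measure.measurable_coe (hDmeas I) measurableSet_Iic
    have : M = {μ : Measure F | ∀ x ∈ S, 1 ≤ μ {x}} ∩
        ({μ : Measure F | ∀ i, 1 ≤ μ (G i)} ∩
          {μ : Measure F | ∀ I : Finset (Fin m), μ (D I \ ↑S) ≤ (I.card : ℝ≥0∞)}) := by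
      ext μ; simp [hM, and_assoc]
    rw [this]
    exact h1.inter (h2.inter h3)
  refine ⟨M, hMmeas, ?_⟩
  -- it remains to prove `iota ⁻¹' M = E`
  ext T
  simp only [Set.mem_preimage, hM, Set.mem_setOf_eq, Set.mem_image]
  constructor
  · rintro ⟨h1, h2, h3⟩
    -- `S ⊆ T`
    have hST : S ⊆ T := by
      intro x hx
      obtain ⟨y, hyT, hy⟩ := (one_le_iota_iff T (measurableSet_singleton x)).mp (h1 x hx)
      rwa [Set.mem_singleton_iff.mp hy] at hyT
    have h2' : ∀ i, ∃ x ∈ T, x ∈ G i := fun i => (one_le_iota_iff T (hG i)).mp (h2 i)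
    set W : Finset F := T \ S with hW
    -- Hall's condition for matching the new facts to indices
    set t : {w // w ∈ W} → Finset (Fin m) :=
      fun w => Finset.univ.filter (fun i => w.1 ∈ G i) with ht
    have hall : ∀ s : Finset {w // w ∈ W}, s.card ≤ (s.biUnion t).card := by
      intro s
      set I := s.biUnion t with hI
      have hsub : s.image Subtype.val ⊆ T.filter (· ∈ D I \ ↑S) := by
        intro x hx
        obtain ⟨w, hw, rfl⟩ := Finset.mem_image.mp hx
        have hwW : (w : F) ∈ T \ S := w.2
        rw [Finset.mem_sdiff] at hwW
        refine Finset.mem_filter.mpr ⟨hwW.1, ?_, hwW.2⟩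
        rw [hmemD]
        intro i hiI hxG
        exact hiI (Finset.mem_biUnion.mpr ⟨w, hw,
          Finset.mem_filter.mpr ⟨Finset.mem_univ i, hxG⟩⟩)
      calc s.card = (s.image Subtype.val).card :=
            (Finset.card_image_of_injective s Subtype.val_injective).symm
        _ ≤ (T.filter (· ∈ D I \ ↑S)).card := Finset.card_le_card hsub
        _ ≤ I.card := (iota_le_iff T (hDmeas I) I.card).mp (h3 I)
    obtain ⟨f, hf_inj, hf_mem⟩ :=
      (Finset.all_card_le_biUnion_card_iff_exists_injective t).mp hall
    -- build the witnessing tuple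
    set v : Fin m → F := fun i =>
      if h : ∃ w, f w = i then (h.choose).1 else (h2' i).choose with hv
    have hvG : ∀ i, v i ∈ G i := by
      intro i
      simp only [v]
      by_cases h : ∃ w, f w = i
      · rw [dif_pos h]
        have := hf_mem h.choose
        rw [ht] at this
        simp only [Finset.mem_filter] at this
        rw [h.choose_spec] at this
        exact this.2
      · simp only [h, dif_neg, not_false_iff]
        exact (h2' i).choose_spec.2
    have hvT : ∀ i, v i ∈ T := by
      intro i
      simp only [v]
      by_cases h : ∃ w, f w = i
      · rw [dif_pos h]
        have hch : (h.choose : F) ∈ T \ S := h.choose.2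
        rw [Finset.mem_sdiff] at hch
        exact hch.1
      · simp only [h, dif_neg, not_false_iff]
        exact (h2' i).choose_spec.1
    refine ⟨v, fun i _ => hvG i, ?_⟩
    ext x
    simp only [Finset.mem_union, Finset.mem_image, Finset.mem_univ, true_and]
    constructor
    · rintro (hx | ⟨i, rfl⟩)
      · exact hST hx
      · exact hvT i
    · intro hx
      by_cases hxS : x ∈ S
      · exact Or.inl hxS
      · refine Or.inr ?_
        have hxW : x ∈ W := Finset.mem_sdiff.mpr ⟨hx, hxS⟩
        set w : {w // w ∈ W} := ⟨x, hxW⟩ with hw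
        refine ⟨f w, ?_⟩
        have h : ∃ w', f w' = f w := ⟨w, rfl⟩
        have hcw : h.choose = w := hf_inj h.choose_spec
        simp only [v]
        rw [dif_pos h, hcw]
  · rintro ⟨v, hv, rfl⟩
    have hvG : ∀ i, v i ∈ G i := fun i => hv i (Set.mem_univ i)
    set T : Finset F := S ∪ Finset.image v Finset.univ with hT
    have hvT : ∀ i, v i ∈ T := fun i => Finset.mem_union_right _
      (Finset.mem_image.mpr ⟨i, Finset.mem_univ i, rfl⟩)
    refine ⟨?_, ?_, ?_⟩
    · intro x hx
      exact (one_le_iota_iff T (measurableSet_singleton x)).mpr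
        ⟨x, Finset.mem_union_left _ hx, rfl⟩
    · intro i
      exact (one_le_iota_iff T (hG i)).mpr ⟨v i, hvT i, hvG i⟩
    · intro I
      rw [iota_le_iff T (hDmeas I)]
      have hsub : T.filter (· ∈ D I \ ↑S) ⊆ I.image v := by
        intro x hx
        rw [Finset.mem_filter] at hx
        have hxS : x ∉ S := hx.2.2
        have hxD : x ∈ D I := hx.2.1
        rcases Finset.mem_union.mp hx.1 with h | h
        · exact absurd h hxS
        · obtain ⟨i, _, hi⟩ := Finset.mem_image.mp h
          have hiI : i ∈ I := by
            by_contra hiI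
            exact (hmemD I x).mp hxD i hiI (hi ▸ hvG i)
          exact Finset.mem_image.mpr ⟨i, hiI, hi⟩
      calc (T.filter (· ∈ D I \ ↑S)).card ≤ (I.image v).card := Finset.card_le_card hsub
        _ ≤ I.card := Finset.card_image_le
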